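/- Let W = [[1,1,1],[0,1,1],[0,0,1]] · diag(1, 1/√2, 1/√3) and P(b₁,b₂,b₃) = W · diag(b₁,b₂,b₃) · W* for positive b₁,b₂,b₃. Then the condition number κ(P(2,4,3)) is strictly smaller than κ(P(1,1,1)); i.e., equal weights do not minimize the condition number among matrices of this form. -/

import Mathlib

open Matrix Finset

private lemma eig_iff_det (A : Matrix (Fin 3) (Fin 3) ℝ) (l : ℝ) :
    (∃ v : Fin 3 → ℝ, v ≠ 0 ∧ A.mulVec v = l • v) ↔ (A - l • 1).det = 0 := by
  rw [← Matrix.exists_mulVec_eq_zero_iff]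
  constructor
  · rintro ⟨v, hv, he⟩
    exact ⟨v, hv, by
      simp [Matrix.sub_mulVec, Matrix.smul_mulVec, Matrix.one_mulVec, he]⟩
  · rintro ⟨v, hv, he⟩
    refine ⟨v, hv, ?_⟩
    have := he
    rw [Matrix.sub_mulVec, Matrix.smul_mulVec, Matrix.one_mulVec, sub_eq_zero] at this
    exact this

private lemma det1 (l : ℝ) :
    ((!![11/6, 5/6, 1/3; 5/6, 5/6, 1/3; 1/3, 1/3, 1/3] : Matrix (Fin 3) (Fin 3) ℝ) - l • 1).det
      = -(6*l^3 - 18*l^2 + 9*l - 1)/6 := by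
  have : ((!![11/6, 5/6, 1/3; 5/6, 5/6, 1/3; 1/3, 1/3, 1/3] : Matrix (Fin 3) (Fin 3) ℝ) - l • 1)
      = !![11/6 - l, 5/6, 1/3; 5/6, 5/6 - l, 1/3; 1/3, 1/3, 1/3 - l] := by
    ext i j
    fin_cases i <;> fin_cases j <;> simp [Matrix.one_apply, Matrix.vecHead, Matrix.vecTail] <;> ring
  rw [this, Matrix.det_fin_three]
  norm_num [Matrix.vecHead, Matrix.vecTail, Matrix.cons_val_two, Matrix.tail_cons]
  ring

private lemma det2 (l : ℝ) :
    ((!![5, 3, 1; 3, 3, 1; 1, 1, 1] : Matrix (Fin 3) (Fin 3) ℝ) - l • 1).det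
      = -(l^3 - 9*l^2 + 12*l - 4) := by
  have : ((!![5, 3, 1; 3, 3, 1; 1, 1, 1] : Matrix (Fin 3) (Fin 3) ℝ) - l • 1)
      = !![5 - l, 3, 1; 3, 3 - l, 1; 1, 1, 1 - l] := by
    ext i j
    fin_cases i <;> fin_cases j <;> simp [Matrix.one_apply, Matrix.vecHead, Matrix.vecTail] <;> ring
  rw [this, Matrix.det_fin_three]
  norm_num [Matrix.vecHead, Matrix.vecTail, Matrix.cons_val_two, Matrix.tail_cons]
  ring

private lemma M1eq :
    ((!![1, 1, 1; 0, 1, 1; 0, 0, 1] * Matrix.diagonal ![1, 1 / Real.sqrt 2, 1 / Real.sqrt 3]) *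
          Matrix.diagonal ![(1 : ℝ), 1, 1] *
          (!![1, 1, 1; 0, 1, 1; 0, 0, 1] *
            Matrix.diagonal ![1, 1 / Real.sqrt 2, 1 / Real.sqrt 3])ᵀ)
      = !![11/6, 5/6, 1/3; 5/6, 5/6, 1/3; 1/3, 1/3, 1/3] := by
  have s2 : Real.sqrt 2 * Real.sqrt 2 = 2 := Real.mul_self_sqrt (by norm_num)
  have s3 : Real.sqrt 3 * Real.sqrt 3 = 3 := Real.mul_self_sqrt (by norm_num)
  have h2 : (0:ℝ) < Real.sqrt 2 := by positivity
  have h3 : (0:ℝ) < Real.sqrt 3 := by positivity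
  have e1 : (Matrix.diagonal ![(1:ℝ), 1 / Real.sqrt 2, 1 / Real.sqrt 3]) =
      !![1,0,0; 0,1/Real.sqrt 2,0; 0,0,1/Real.sqrt 3] := by
    ext i j; fin_cases i <;> fin_cases j <;>
      simp [Matrix.diagonal_apply, Matrix.vecHead, Matrix.vecTail]
  have e2 : (Matrix.diagonal ![(1:ℝ), 1, 1]) = !![1,0,0; 0,1,0; 0,0,1] := by
    ext i j; fin_cases i <;> fin_cases j <;>
      simp [Matrix.diagonal_apply, Matrix.vecHead, Matrix.vecTail]
  rw [e1, e2]
  ext i j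
  fin_cases i <;> fin_cases j <;>
    · simp [Matrix.mul_apply, Fin.sum_univ_three, Matrix.transpose_apply,
        Matrix.vecHead, Matrix.vecTail]
      try field_simp
      try nlinarith [s2, s3, h2, h3]

private lemma M2eq :
    ((!![1, 1, 1; 0, 1, 1; 0, 0, 1] * Matrix.diagonal ![1, 1 / Real.sqrt 2, 1 / Real.sqrt 3]) *
          Matrix.diagonal ![(2 : ℝ), 4, 3] *
          (!![1, 1, 1; 0, 1, 1; 0, 0, 1] *
            Matrix.diagonal ![1, 1 / Real.sqrt 2, 1 / Real.sqrt 3])ᵀ)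
      = !![5, 3, 1; 3, 3, 1; 1, 1, 1] := by
  have s2 : Real.sqrt 2 * Real.sqrt 2 = 2 := Real.mul_self_sqrt (by norm_num)
  have s3 : Real.sqrt 3 * Real.sqrt 3 = 3 := Real.mul_self_sqrt (by norm_num)
  have h2 : (0:ℝ) < Real.sqrt 2 := by positivity
  have h3 : (0:ℝ) < Real.sqrt 3 := by positivity
  have e1 : (Matrix.diagonal ![(1:ℝ), 1 / Real.sqrt 2, 1 / Real.sqrt 3]) =
      !![1,0,0; 0,1/Real.sqrt 2,0; 0,0,1/Real.sqrt 3] := by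
    ext i j; fin_cases i <;> fin_cases j <;>
      simp [Matrix.diagonal_apply, Matrix.vecHead, Matrix.vecTail]
  have e2 : (Matrix.diagonal ![(2:ℝ), 4, 3]) = !![2,0,0; 0,4,0; 0,0,3] := by
    ext i j; fin_cases i <;> fin_cases j <;>
      simp [Matrix.diagonal_apply, Matrix.vecHead, Matrix.vecTail]
  rw [e1, e2]
  ext i j
  fin_cases i <;> fin_cases j <;>
    · simp [Matrix.mul_apply, Fin.sum_univ_three, Matrix.transpose_apply,
        Matrix.vecHead, Matrix.vecTail]
      try field_simp
      try nlinarith [s2, s3, h2, h3]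

set_option maxHeartbeats 1000000 in
theorem stmt18
    (lmin1 lmax1 lmin2 lmax2 : ℝ)
    (hmin1 : IsLeast {l : ℝ | ∃ v : Fin 3 → ℝ, v ≠ 0 ∧
        ((!![1, 1, 1; 0, 1, 1; 0, 0, 1] * Matrix.diagonal ![1, 1 / Real.sqrt 2, 1 / Real.sqrt 3]) *
          Matrix.diagonal ![(1 : ℝ), 1, 1] *
          (!![1, 1, 1; 0, 1, 1; 0, 0, 1] *
            Matrix.diagonal ![1, 1 / Real.sqrt 2, 1 / Real.sqrt 3])ᵀ).mulVec v = l • v} lmin1)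
    (hmax1 : IsGreatest {l : ℝ | ∃ v : Fin 3 → ℝ, v ≠ 0 ∧
        ((!![1, 1, 1; 0, 1, 1; 0, 0, 1] * Matrix.diagonal ![1, 1 / Real.sqrt 2, 1 / Real.sqrt 3]) *
          Matrix.diagonal ![(1 : ℝ), 1, 1] *
          (!![1, 1, 1; 0, 1, 1; 0, 0, 1] *
            Matrix.diagonal ![1, 1 / Real.sqrt 2, 1 / Real.sqrt 3])ᵀ).mulVec v = l • v} lmax1)
    (hmin2 : IsLeast {l : ℝ | ∃ v : Fin 3 → ℝ, v ≠ 0 ∧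
        ((!![1, 1, 1; 0, 1, 1; 0, 0, 1] * Matrix.diagonal ![1, 1 / Real.sqrt 2, 1 / Real.sqrt 3]) *
          Matrix.diagonal ![(2 : ℝ), 4, 3] *
          (!![1, 1, 1; 0, 1, 1; 0, 0, 1] *
            Matrix.diagonal ![1, 1 / Real.sqrt 2, 1 / Real.sqrt 3])ᵀ).mulVec v = l • v} lmin2)
    (hmax2 : IsGreatest {l : ℝ | ∃ v : Fin 3 → ℝ, v ≠ 0 ∧
        ((!![1, 1, 1; 0, 1, 1; 0, 0, 1] * Matrix.diagonal ![1, 1 / Real.sqrt 2, 1 / Real.sqrt 3]) *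
          Matrix.diagonal ![(2 : ℝ), 4, 3] *
          (!![1, 1, 1; 0, 1, 1; 0, 0, 1] *
            Matrix.diagonal ![1, 1 / Real.sqrt 2, 1 / Real.sqrt 3])ᵀ).mulVec v = l • v} lmax2) :
    lmax2 / lmin2 < lmax1 / lmin1 := by
  simp only [IsLeast, IsGreatest, Set.mem_setOf_eq, M1eq, M2eq, mem_lowerBounds,
    mem_upperBounds, eig_iff_det, det1, det2] at hmin1 hmax1 hmin2 hmax2
  -- translate det conditions into polynomial conditions
  have key1 : ∀ l : ℝ, (-(6*l^3 - 18*l^2 + 9*l - 1)/6 = 0) ↔ 6*l^3 - 18*l^2 + 9*l - 1 = 0 := by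
    intro l; constructor <;> intro h <;> linarith
  have key2 : ∀ l : ℝ, (-(l^3 - 9*l^2 + 12*l - 4) = 0) ↔ l^3 - 9*l^2 + 12*l - 4 = 0 := by
    intro l; constructor <;> intro h <;> linarith
  -- √3 facts
  set t := Real.sqrt 3 with htdef
  have ht : t^2 = 3 := Real.sq_sqrt (by norm_num)
  have ht0 : 0 ≤ t := Real.sqrt_nonneg 3
  have htlo : 1.7 < t := by nlinarith
  have hthi : t < 1.75 := by nlinarith
  -- Case 2: eigenvalues are exactly roots of (l-1)(l^2-8l+4)
  have hhi2 : 4 + 2*t ≤ lmax2 := hmax2.2 _ ((key2 _).mpr (by linear_combination (8*t+12)*ht))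
  have hlo2 : lmin2 ≤ 4 - 2*t := hmin2.2 _ ((key2 _).mpr (by linear_combination (12-8*t)*ht))
  have hqmax : lmax2^3 - 9*lmax2^2 + 12*lmax2 - 4 = 0 := (key2 _).mp hmax2.1
  have hqmin : lmin2^3 - 9*lmin2^2 + 12*lmin2 - 4 = 0 := (key2 _).mp hmin2.1
  have hmax2eq : lmax2 = 4 + 2*t := by
    have hfac : (lmax2 - 1) * ((lmax2 - (4-2*t)) * (lmax2 - (4+2*t))) = 0 := by
      linear_combination hqmax - 4*(lmax2-1)*ht
    rcases mul_eq_zero.mp hfac with h | h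
    · nlinarith
    rcases mul_eq_zero.mp h with h | h
    · nlinarith
    · linarith [sub_eq_zero.mp h]
  have hmin2eq : lmin2 = 4 - 2*t := by
    have hfac : (lmin2 - 1) * ((lmin2 - (4-2*t)) * (lmin2 - (4+2*t))) = 0 := by
      linear_combination hqmin - 4*(lmin2-1)*ht
    rcases mul_eq_zero.mp hfac with h | h
    · nlinarith
    rcases mul_eq_zero.mp h with h | h
    · linarith [sub_eq_zero.mp h]
    · nlinarith
  -- Case 1: bounds via intermediate value theorem
  have gcont : ∀ a b : ℝ, ContinuousOn (fun l : ℝ => 6*l^3 - 18*l^2 + 9*l - 1) (Set.Icc a b) := by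
    intro a b; fun_prop
  have hbig : ∃ r ∈ Set.Icc (2.4:ℝ) 2.5, 6*r^3 - 18*r^2 + 9*r - 1 = 0 := by
    have h0 : (0:ℝ) ∈ Set.Icc (6*(2.4:ℝ)^3 - 18*2.4^2 + 9*2.4 - 1) (6*(2.5:ℝ)^3 - 18*2.5^2 + 9*2.5 - 1) := by
      norm_num
    obtain ⟨r, hr, hr0⟩ := intermediate_value_Icc (by norm_num : (2.4:ℝ) ≤ 2.5) (gcont _ _) h0
    exact ⟨r, hr, hr0⟩
  have hsmall : ∃ s ∈ Set.Icc (0.15:ℝ) 0.16, 6*s^3 - 18*s^2 + 9*s - 1 = 0 := by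
    have h0 : (0:ℝ) ∈ Set.Icc (6*(0.15:ℝ)^3 - 18*0.15^2 + 9*0.15 - 1) (6*(0.16:ℝ)^3 - 18*0.16^2 + 9*0.16 - 1) := by
      norm_num
    obtain ⟨s, hs, hs0⟩ := intermediate_value_Icc (by norm_num : (0.15:ℝ) ≤ 0.16) (gcont _ _) h0
    exact ⟨s, hs, hs0⟩
  obtain ⟨r, hrIcc, hr0⟩ := hbig
  obtain ⟨s, hsIcc, hs0⟩ := hsmall
  have hmax1ge : 2.4 ≤ lmax1 := le_trans hrIcc.1 (hmax1.2 _ ((key1 _).mpr hr0))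
  have hmin1le : lmin1 ≤ 0.16 := le_trans (hmin1.2 _ ((key1 _).mpr hs0)) hsIcc.2
  have hmin1poly : 6*lmin1^3 - 18*lmin1^2 + 9*lmin1 - 1 = 0 := (key1 _).mp hmin1.1
  have hmin1pos : 0 < lmin1 := by nlinarith
  -- conclude
  have h15 : (15:ℝ) ≤ lmax1 / lmin1 := by
    rw [le_div_iff₀ hmin1pos]; nlinarith
  have hlt : lmax2 / lmin2 < 15 := by
    rw [hmax2eq, hmin2eq, div_lt_iff₀ (by nlinarith : (0:ℝ) < 4 - 2*t)]
    nlinarith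
  linarith
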